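/- Let R = DV and D = RU be decompositions obtained by the lazy reduction algorithm, with R reduced. If U[τ_i, τ_j] ≠ 0 for τ_i ≠ τ_j, then low_R(τ_j) < low_R(τ_i), where a zero column has low equal to a dummy minimal value. -/

import Mathlib

open Matrix

variable {F : Type*} [Field F] [DecidableEq F] {m n : ℕ}

/-- 1-based row index of the lowest nonzero entry of column `j`;
`0` (the dummy minimal value) if the column is zero. -/
def lowNat (R : Matrix (Fin m) (Fin n) F) (j : Fin n) : ℕ :=
  (Finset.univ.filter fun i : Fin m => R i j ≠ 0).sup fun i => i.val + 1

/-- Subtract `α` times column `i` from column `j`. -/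
def addColMul {k : ℕ} (M : Matrix (Fin k) (Fin n) F) (α : F) (i j : Fin n) :
    Matrix (Fin k) (Fin n) F :=
  fun a b => if b = j then M a b - α * M a i else M a b

/-- Add `α` times row `j` to row `i`. -/
def addRowMul (M : Matrix (Fin n) (Fin n) F) (α : F) (i j : Fin n) :
    Matrix (Fin n) (Fin n) F :=
  fun a b => if a = i then M a b + α * M j b else M a b

/-- The state `(R, V, U)` maintained by the lazy reduction. -/
structure RedState (F : Type*) (m n : ℕ) where
  R : Matrix (Fin m) (Fin n) F
  V : Matrix (Fin n) (Fin n) F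
  U : Matrix (Fin n) (Fin n) F

/-- Inner while-loop of the lazy reduction for column `j`: while the column is
nonzero and some earlier column has the same low, subtract
`α = R[low, j] / R[low, i]` times column `i` from column `j` (in `R` and `V`)
and record the inverse row operation in `U`.  Each iteration strictly decreases
the low of column `j`, so fuel `m + 1` always suffices. -/
noncomputable def reduceColAux : ℕ → RedState F m n → Fin n → RedState F m n
  | 0, s, _ => s
  | fuel + 1, s, j =>
    if h : lowNat s.R j ≠ 0 ∧ ∃ i : Fin n, i < j ∧ lowNat s.R i = lowNat s.R j then
      let i := h.2.choose
      let r : Fin m := ⟨lowNat s.R j - 1, by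
        have hle : lowNat s.R j ≤ m := Finset.sup_le fun a _ => a.isLt
        have := h.1
        omega⟩
      let α := s.R r j / s.R r i
      reduceColAux fuel ⟨addColMul s.R α i j, addColMul s.V α i j, addRowMul s.U α i j⟩ j
    else s

/-- The lazy reduction algorithm: starting from `R = D`, `V = U = 1`, process
the columns in increasing order. -/
noncomputable def lazyReduce (D : Matrix (Fin m) (Fin n) F) : RedState F m n :=
  (List.finRange n).foldl (fun s j => reduceColAux (m + 1) s j) ⟨D, 1, 1⟩

lemma le_lowNat_of_ne (R : Matrix (Fin m) (Fin n) F) (j : Fin n) (a : Fin m)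
    (h : R a j ≠ 0) : a.val + 1 ≤ lowNat R j :=
  Finset.le_sup (f := fun i : Fin m => i.val + 1)
    (Finset.mem_filter.2 ⟨Finset.mem_univ _, h⟩)

lemma eq_zero_of_lowNat_lt (R : Matrix (Fin m) (Fin n) F) (j : Fin n) (a : Fin m)
    (h : lowNat R j < a.val + 1) : R a j = 0 := by
  by_contra hc
  exact absurd (le_lowNat_of_ne R j a hc) (not_le.2 h)

lemma lowNat_spec (R : Matrix (Fin m) (Fin n) F) (j : Fin n) (h : lowNat R j ≠ 0) :
    ∃ a : Fin m, a.val + 1 = lowNat R j ∧ R a j ≠ 0 := by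
  have hne : (Finset.univ.filter fun i : Fin m => R i j ≠ 0).Nonempty := by
    by_contra hc
    rw [Finset.not_nonempty_iff_eq_empty] at hc
    simp [lowNat, hc] at h
  obtain ⟨a, ha, hsup⟩ := Finset.exists_mem_eq_sup _ hne fun i : Fin m => i.val + 1
  exact ⟨a, by rw [lowNat, hsup], (Finset.mem_filter.1 ha).2⟩

lemma lowNat_addColMul_ne (M : Matrix (Fin m) (Fin n) F) (α : F) (i j b : Fin n)
    (hb : b ≠ j) : lowNat (addColMul M α i j) b = lowNat M b := by
  simp [lowNat, addColMul, hb]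

lemma lowNat_addColMul_lt (M : Matrix (Fin m) (Fin n) F) (i j : Fin n)
    (r : Fin m) (hr : r.val + 1 = lowNat M j) (hij : lowNat M i = lowNat M j)
    (hri : M r i ≠ 0) :
    lowNat (addColMul M (M r j / M r i) i j) j < lowNat M j := by
  have h0 : lowNat M j ≠ 0 := by omega
  refine lt_of_le_of_lt (Finset.sup_le ?_) (show lowNat M j - 1 < lowNat M j by omega)
  intro a ha
  rw [Finset.mem_filter] at ha
  have ha' : M a j - M r j / M r i * M a i ≠ 0 := by simpa [addColMul] using ha.2
  by_contra hc
  push_neg at hc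
  rcases eq_or_lt_of_le (show r.val ≤ a.val by omega) with heq | hlt
  · have : a = r := Fin.ext heq.symm
    subst this
    rw [div_mul_cancel₀ _ hri, sub_self] at ha'
    exact ha' rfl
  · have h1 : M a j = 0 := eq_zero_of_lowNat_lt M j a (by omega)
    have h2 : M a i = 0 := eq_zero_of_lowNat_lt M i a (by omega)
    rw [h1, h2] at ha'
    simp at ha'

/-- The key invariant: off-diagonal nonzero entries of `U` force a strict
inequality of lows. -/
def LowInv (R : Matrix (Fin m) (Fin n) F) (U : Matrix (Fin n) (Fin n) F) : Prop :=
  ∀ a b : Fin n, a ≠ b → U a b ≠ 0 → lowNat R b < lowNat R a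

lemma lowInv_step (R : Matrix (Fin m) (Fin n) F) (U : Matrix (Fin n) (Fin n) F)
    (α : F) (i j : Fin n) (hij : i ≠ j)
    (hlt : lowNat (addColMul R α i j) j < lowNat R j)
    (hlowi : lowNat R i = lowNat R j)
    (hrow : ∀ b, b ≠ j → U j b = 0)
    (hInv : LowInv R U) :
    LowInv (addColMul R α i j) (addRowMul U α i j) := by
  intro a b hab hU
  by_cases ha : a = i
  · rw [ha]
    rw [lowNat_addColMul_ne R α i j i hij]
    by_cases hb : b = j
    · rw [hb]
      exact hlt.trans_le hlowi.ge
    · rw [lowNat_addColMul_ne R α i j b hb]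
      have hUib : U i b ≠ 0 := by
        rw [ha] at hU
        simpa [addRowMul, hrow b hb] using hU
      exact hInv i b (ha ▸ hab) hUib
  · have hU' : U a b ≠ 0 := by simpa [addRowMul, ha] using hU
    by_cases haj : a = j
    · rw [haj] at hU' hab
      exact absurd (hrow b (Ne.symm hab)) hU'
    · rw [lowNat_addColMul_ne R α i j a haj]
      by_cases hb : b = j
      · rw [hb]
        exact hlt.trans (hInv a j (hb ▸ hab) (hb ▸ hU'))
      · rw [lowNat_addColMul_ne R α i j b hb]
        exact hInv a b hab hU'

lemma reduceColAux_U_row_ge : ∀ (fuel : ℕ) (s : RedState F m n) (j a : Fin n),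
    j ≤ a → (reduceColAux fuel s j).U a = s.U a := by
  intro fuel
  induction fuel with
  | zero => intro s j a _; rfl
  | succ k ih =>
    intro s j a hja
    rw [reduceColAux]
    split
    · next h =>
      rw [ih _ j a hja]
      funext b
      have hi : h.2.choose < j := h.2.choose_spec.1
      have : h.2.choose ≠ a := ne_of_lt (lt_of_lt_of_le hi hja)
      simp [addRowMul, Ne.symm this]
    · rfl

lemma reduceColAux_lowInv : ∀ (fuel : ℕ) (s : RedState F m n) (j : Fin n),
    LowInv s.R s.U → (∀ b, b ≠ j → s.U j b = 0) →
    LowInv (reduceColAux fuel s j).R (reduceColAux fuel s j).U := by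
  intro fuel
  induction fuel with
  | zero => intro s j hInv _; exact hInv
  | succ k ih =>
    intro s j hInv hrow
    rw [reduceColAux]
    split
    · next h =>
      set i := h.2.choose with hi_def
      have hspec := h.2.choose_spec
      have hij : i ≠ j := ne_of_lt hspec.1
      have hlowi : lowNat s.R i = lowNat s.R j := hspec.2
      set r : Fin m := ⟨lowNat s.R j - 1, by
        have hle : lowNat s.R j ≤ m := Finset.sup_le fun a _ => a.isLt
        have := h.1
        omega⟩ with hr_def
      have hrval : r.val + 1 = lowNat s.R j := by
        have := h.1; simp [hr_def]; omega
      have hri : s.R r i ≠ 0 := by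
        obtain ⟨a, ha1, ha2⟩ := lowNat_spec s.R i (by rw [hlowi]; exact h.1)
        have : a = r := by
          apply Fin.ext
          rw [hlowi] at ha1
          omega
        rwa [← this]
      have hlt : lowNat (addColMul s.R (s.R r j / s.R r i) i j) j < lowNat s.R j :=
        lowNat_addColMul_lt s.R i j r hrval hlowi hri
      apply ih
      · exact lowInv_step s.R s.U _ i j hij hlt hlowi hrow hInv
      · intro b hb
        simp only [addRowMul]
        rw [if_neg (Ne.symm hij)]
        exact hrow b hb
    · exact hInv

lemma fold_lowInv : ∀ (l : List (Fin n)) (s : RedState F m n),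
    l.Pairwise (· < ·) →
    LowInv s.R s.U →
    (∀ j ∈ l, ∀ b, b ≠ j → s.U j b = 0) →
    LowInv (l.foldl (fun s j => reduceColAux (m + 1) s j) s).R
      (l.foldl (fun s j => reduceColAux (m + 1) s j) s).U := by
  intro l
  induction l with
  | nil => intro s _ hInv _; exact hInv
  | cons j t ih =>
    intro s hpw hInv hrow
    rw [List.foldl_cons]
    apply ih
    · exact hpw.of_cons
    · exact reduceColAux_lowInv (m + 1) s j hInv
        (hrow j List.mem_cons_self)
    · intro j' hj' b hb
      have hjj' : j ≤ j' := le_of_lt ((List.pairwise_cons.1 hpw).1 j' hj')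
      rw [reduceColAux_U_row_ge (m + 1) s j j' hjj']
      exact hrow j' (List.mem_cons_of_mem j hj') b hb

/-- If `R = DV`, `D = RU` are obtained by the lazy reduction and
`U[τi, τj] ≠ 0` for `τi ≠ τj`, then `low_R(τj) < low_R(τi)`
(zero columns having the dummy minimal low `0`). -/
theorem lazy_U_nonzero_implies_low_lt (D : Matrix (Fin m) (Fin n) F) (τi τj : Fin n)
    (hne : τi ≠ τj) (hU : (lazyReduce D).U τi τj ≠ 0) :
    lowNat (lazyReduce D).R τj < lowNat (lazyReduce D).R τi := by
  have := fold_lowInv (List.finRange n) ⟨D, 1, 1⟩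
    (List.pairwise_lt_finRange n)
    (fun a b hab hU => absurd (Matrix.one_apply_ne hab) hU)
    (fun j _ b hb => Matrix.one_apply_ne (Ne.symm hb))
  exact this τi τj hne hU
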